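/- Let m ≥ 2 be a natural number and q = exp(2πi/m) ∈ ℂ the fundamental m-th root of unity. Then for every natural number n with 0 ≤ n ≤ m−1, the complex identity |{n+1}_q| − exp(iπ/m)·|{n}_q| = exp(−iπn/m) holds, where |·| denotes the complex absolute value regarded as a complex number. -/

import Mathlib

open Complex

lemma exp_two_mul_I_sub_one (b : ℝ) :
    Complex.exp ((2*b : ℝ) * I) - 1 = (2 * Real.sin b : ℝ) * Complex.exp ((b:ℝ) * I) * I := by
  rw [Complex.exp_mul_I, Complex.exp_mul_I]
  push_cast
  rw [Complex.cos_two_mul, Complex.sin_two_mul]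
  have h := Complex.sin_sq_add_cos_sq (b : ℂ)
  linear_combination (2:ℂ)*h - 2*Complex.sin b^2 * Complex.I_sq


/-- For `m ≥ 2` and `q = exp(2πi/m)` the fundamental `m`-th root of unity, the moduli of
the Q-numbers `{n}_q = ∑_{k<n} q^k` satisfy the Biedenharn–Macfarlane-type identity
`|{n+1}_q| − exp(iπ/m)·|{n}_q| = exp(−iπn/m)` for all `0 ≤ n ≤ m−1`, where the absolute
values are regarded as complex numbers. -/
theorem abs_Qnum_biedenharn_identity (m : ℕ) (hm : 2 ≤ m)
    (q : ℂ) (hq : q = Complex.exp (2 * Real.pi * Complex.I / m))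
    (n : ℕ) (hn : n ≤ m - 1) :
    (‖∑ k ∈ Finset.range (n + 1), q ^ k‖ : ℂ)
      - Complex.exp (Real.pi * Complex.I / m) * (‖∑ k ∈ Finset.range n, q ^ k‖ : ℂ)
      = Complex.exp (-(Real.pi * Complex.I * n / m)) := by
  have hm2 : (2:ℝ) ≤ m := by exact_mod_cast hm
  have hm0 : (0:ℝ) < m := by linarith
  set θ : ℝ := Real.pi / m with hθ
  have hθpos : 0 < θ := div_pos Real.pi_pos hm0
  have hθlt : θ < Real.pi := by
    rw [hθ, div_lt_iff₀ hm0]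
    nlinarith [Real.pi_pos]
  have hsθ : 0 < Real.sin θ := Real.sin_pos_of_pos_of_lt_pi hθpos hθlt
  have hq' : q = Complex.exp ((2*θ:ℝ) * I) := by
    rw [hq, hθ]; push_cast; ring_nf
  have hq1 : q ≠ 1 := by
    rw [hq']
    intro h
    have h2 : ((2 * Real.sin θ : ℝ) : ℂ) * Complex.exp ((θ:ℝ) * I) * I = 0 := by
      rw [← exp_two_mul_I_sub_one, h, sub_self]
    simp only [mul_eq_zero, Complex.exp_ne_zero, Complex.I_ne_zero, or_false,
      Complex.ofReal_eq_zero] at h2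
    have := hsθ.ne'
    norm_num at h2
    exact this h2
  have habs : ∀ k : ℕ, k ≤ m →
      ‖∑ j ∈ Finset.range k, q ^ j‖ = Real.sin (k*θ)/Real.sin θ := by
    intro k hk
    have hkm : (k:ℝ) ≤ m := by exact_mod_cast hk
    have hkθ0 : 0 ≤ (k:ℝ) * θ := by positivity
    have hkθπ : (k:ℝ) * θ ≤ Real.pi := by
      have : (k:ℝ) * θ ≤ (m:ℝ) * θ := by nlinarith
      have hmθ : (m:ℝ) * θ = Real.pi := by
        rw [hθ]; field_simp
      linarith
    have e1 : Complex.exp ((2*θ:ℝ)*I) ^ k = Complex.exp ((2*((k:ℝ)*θ):ℝ)*I) := by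
      rw [← Complex.exp_nat_mul]; congr 1; push_cast; ring
    rw [geom_sum_eq hq1, hq', e1, norm_div, exp_two_mul_I_sub_one, exp_two_mul_I_sub_one]
    simp only [norm_mul, Complex.norm_exp_ofReal_mul_I, Complex.norm_I, Complex.norm_real,
      mul_one, Real.norm_eq_abs, abs_mul]
    rw [_root_.abs_of_nonneg (Real.sin_nonneg_of_nonneg_of_le_pi hkθ0 hkθπ),
      _root_.abs_of_nonneg hsθ.le]
    rw [_root_.abs_two, mul_div_mul_left _ _ (by norm_num : (2:ℝ) ≠ 0)]
  have h1 := habs (n+1) (by omega)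
  have h2 := habs n (by omega)
  rw [h1, h2]
  have hsC : (Real.sin θ : ℂ) ≠ 0 := by exact_mod_cast hsθ.ne'
  have eθ : Complex.exp (Real.pi * I / m) = Complex.exp ((θ:ℝ)*I) := by
    rw [hθ]; push_cast; ring_nf
  have en : Complex.exp (-(Real.pi * I * n / m)) = Complex.exp (((-((n:ℝ)*θ)):ℝ)*I) := by
    rw [hθ]; push_cast; ring_nf
  rw [eθ, en, Complex.exp_mul_I, Complex.exp_mul_I]
  have hs : Real.sin (((n+1:ℕ):ℝ)*θ) = Real.sin (n*θ)*Real.cos θ + Real.cos (n*θ)*Real.sin θ := by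
    push_cast; rw [add_mul, one_mul, Real.sin_add]
  rw [hs]
  simp only [← Complex.ofReal_sin, ← Complex.ofReal_cos]
  simp only [Real.cos_neg, Real.sin_neg]
  simp only [Complex.ofReal_div, Complex.ofReal_add, Complex.ofReal_mul, Complex.ofReal_neg]
  have key : ∀ a b c d s : ℂ, s ≠ 0 → a - c*b = d*s → a/s - c*(b/s) = d := by
    intro a b c d s hs h
    field_simp
    linear_combination h
  exact key _ _ _ _ _ hsC (by ring)
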